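/- arXiv:2202.12876 — 4 statements merged into one kernel-verified Lean document; each statement's English description precedes it below -/
import Mathlib

section
/- Monotonicity of the pinching inequalities (claim (1) in the proof of Remark 2.8): Let θ ∈ M_ℝ and let χ ∈ M_ℝ satisfy χ − θ ∈ ∇̄_ℓ. Let λ' ∈ ℓ^⊥ with |λ'| = 1 and let 0 < t ≤ s. If |⟨λ' + t λ_0, χ − θ⟩| > ⟨λ' + t λ_0, ζ_{λ'}⟩/2, then |⟨λ' + s λ_0, χ − θ⟩| > ⟨λ' + s λ_0, ζ_{λ'}⟩/2. -/
noncomputable section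

/-- The canonical pairing between `N_ℝ = Fin d → ℝ` and `M_ℝ = Fin d → ℝ`. -/
def pairR {d : ℕ} (lam chi : Fin d → ℝ) : ℝ := ∑ i, lam i * chi i

/-- The lattice `M ⊆ M_ℝ`, i.e. the image of `Fin d → ℤ` in `Fin d → ℝ`. -/
def latticePts (d : ℕ) : Set (Fin d → ℝ) :=
  Set.range (fun χ : Fin d → ℤ => fun i => ((χ i : ℝ)))

/-- `ζ_λ := −∑_{i : ⟨λ, β_i⟩ ≤ 0} β_i + ∑_{j : ⟨λ, α_j⟩ < 0} α_j`. -/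
def zetaW {d n m : ℕ} (β : Fin n → Fin d → ℝ) (α : Fin m → Fin d → ℝ)
    (lam : Fin d → ℝ) : Fin d → ℝ :=
  -(∑ i ∈ Finset.univ.filter (fun i => pairR lam (β i) ≤ 0), β i) +
    ∑ j ∈ Finset.univ.filter (fun j => pairR lam (α j) < 0), α j

/-- `η_λ := ⟨λ, ζ_λ⟩`. -/
def etaW {d n m : ℕ} (β : Fin n → Fin d → ℝ) (α : Fin m → Fin d → ℝ)
    (lam : Fin d → ℝ) : ℝ := pairR lam (zetaW β α lam)

/-- The cylinder window `∇̄_ℓ`. -/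
def cylinderW {d n m : ℕ} (β : Fin n → Fin d → ℝ) (α : Fin m → Fin d → ℝ)
    (lam0 ℓ : Fin d → ℝ) : Set (Fin d → ℝ) :=
  {χ | |pairR lam0 χ| ≤ etaW β α lam0 / 2 ∧
    ∀ lam' : Fin d → ℝ, pairR lam' ℓ = 0 → |pairR lam' χ| ≤ etaW β α lam' / 2}

/-- The barrel window `∇_ℓ`. -/
def barrelW {d n m : ℕ} (β : Fin n → Fin d → ℝ) (α : Fin m → Fin d → ℝ)
    (lam0 ℓ : Fin d → ℝ) : Set (Fin d → ℝ) :=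
  {χ | |pairR lam0 χ| ≤ etaW β α lam0 / 2 ∧
    ∀ lam' : Fin d → ℝ, pairR lam' ℓ = 0 →
      (|pairR lam' χ| < etaW β α lam' / 2 ∨
        (pairR lam' χ = etaW β α lam' / 2 ∧
          pairR lam0 χ ≤ pairR lam0 (zetaW β α lam') / 2) ∨
        (pairR lam' χ = -(etaW β α lam' / 2) ∧
          -(pairR lam0 (zetaW β α lam') / 2) ≤ pairR lam0 χ))}

/-- `θ` is `λ_0`-generic with respect to `ℓ`: for every `λ' ∈ ℓ^⊥ ∪ {0}` there is no `χ ∈ M`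
with `⟨λ_0, χ − θ − ζ_{λ'}/2⟩ = 0`.  (Note `0 ∈ ℓ^⊥`.) -/
def genericW {d n m : ℕ} (β : Fin n → Fin d → ℝ) (α : Fin m → Fin d → ℝ)
    (lam0 ℓ θ : Fin d → ℝ) : Prop :=
  ∀ lam' : Fin d → ℝ, pairR lam' ℓ = 0 →
    ∀ χ ∈ latticePts d, pairR lam0 (χ - θ - (2⁻¹ : ℝ) • zetaW β α lam') ≠ 0

/-- A norm on `N_ℝ = Fin d → ℝ`. -/
structure IsNorm {d : ℕ} (nrm : (Fin d → ℝ) → ℝ) : Prop where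
  eq_zero_iff : ∀ x, nrm x = 0 ↔ x = 0
  smul_eq : ∀ (c : ℝ) (x : Fin d → ℝ), nrm (c • x) = |c| * nrm x
  add_le : ∀ x y, nrm (x + y) ≤ nrm x + nrm y

/-- The pinched cylinder `∇̄_{ℓ,t}`. -/
def pinchedW {d n m : ℕ} (β : Fin n → Fin d → ℝ) (α : Fin m → Fin d → ℝ)
    (lam0 ℓ : Fin d → ℝ) (nrm : (Fin d → ℝ) → ℝ) (t : ℝ) : Set (Fin d → ℝ) :=
  {χ | χ ∈ cylinderW β α lam0 ℓ ∧
    ∀ lam' : Fin d → ℝ, pairR lam' ℓ = 0 → nrm lam' = 1 →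
      |pairR (lam' + t • lam0) χ| ≤ pairR (lam' + t • lam0) (zetaW β α lam') / 2}

/-- claim (1) in the proof of Remark 2.8: monotonicity of the pinching
inequalities in t. -/
theorem pinching_monotone {d n m : ℕ} (hn : 1 ≤ n)
    (β : Fin n → Fin d → ℝ) (α : Fin m → Fin d → ℝ)
    (hβ : ∀ i, β i ∈ latticePts d) (hα : ∀ j, α j ∈ latticePts d)
    (lam0 : Fin d → ℝ)
    (hlam0β : ∀ i, pairR lam0 (β i) < 0)
    (hlam0α : ∀ j, pairR lam0 (α j) = 0)
    (ℓ : Fin d → ℝ) (hℓ : pairR lam0 ℓ ≠ 0)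
    (nrm : (Fin d → ℝ) → ℝ) (hnrm : IsNorm nrm) (hnrm0 : nrm lam0 = 1)
    (θ χ : Fin d → ℝ) (hχ : χ - θ ∈ cylinderW β α lam0 ℓ)
    (lam' : Fin d → ℝ) (hlam' : pairR lam' ℓ = 0) (hlam'norm : nrm lam' = 1)
    (t s : ℝ) (ht : 0 < t) (hts : t ≤ s)
    (h : pairR (lam' + t • lam0) (zetaW β α lam') / 2 < |pairR (lam' + t • lam0) (χ - θ)|) :
    pairR (lam' + s • lam0) (zetaW β α lam') / 2 < |pairR (lam' + s • lam0) (χ - θ)| := by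
  have key : ∀ (u : ℝ) (v : Fin d → ℝ),
      pairR (lam' + u • lam0) v = pairR lam' v + u * pairR lam0 v := by
    intro u v
    simp [pairR, Finset.mul_sum, add_mul, Finset.sum_add_distrib, mul_assoc]
  set a := pairR lam' (χ - θ) with ha
  set b := pairR lam0 (χ - θ) with hb
  set A := pairR lam' (zetaW β α lam') with hA
  set B := pairR lam0 (zetaW β α lam') with hB
  rw [key, key] at h ⊢
  have habs : |a| ≤ A / 2 := hχ.2 lam' hlam'
  have habs' := abs_le.mp habs
  rcases le_or_gt 0 (a + t * b) with hc | hc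
  · rw [abs_of_nonneg hc] at h
    have hgoal : (A + s * B) / 2 < a + s * b := by nlinarith
    exact hgoal.trans_le (le_abs_self _)
  · rw [abs_of_neg hc] at h
    have hgoal : (A + s * B) / 2 < -(a + s * b) := by nlinarith
    exact hgoal.trans_le (neg_le_abs _)
end
end

section
/- Pinched cylinders lie in the barrel window: for every θ ∈ M_ℝ and every t > 0, one has the containment of lattice-point sets (θ + ∇̄_{ℓ,t}) ∩ M ⊆ (θ + ∇_ℓ) ∩ M. -/
noncomputable section

lemma pairR_smul_left' {d : ℕ} (c : ℝ) (a χ : Fin d → ℝ) :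
    pairR (c • a) χ = c * pairR a χ := by
  simp [pairR, Finset.mul_sum, mul_assoc]

lemma pairR_add_left' {d : ℕ} (a b χ : Fin d → ℝ) :
    pairR (a + b) χ = pairR a χ + pairR b χ := by
  simp [pairR, add_mul, Finset.sum_add_distrib]

lemma pairR_zero_left' {d : ℕ} (χ : Fin d → ℝ) : pairR (0 : Fin d → ℝ) χ = 0 := by
  simp [pairR]

lemma isNorm_pos {d : ℕ} {nrm : (Fin d → ℝ) → ℝ} (h : IsNorm nrm) {x : Fin d → ℝ}
    (hx : x ≠ 0) : 0 < nrm x := by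
  have h0 : nrm 0 = 0 := (h.eq_zero_iff 0).mpr rfl
  have hneg : nrm (-x) = nrm x := by
    have := h.smul_eq (-1) x
    simpa using this
  have htri := h.add_le x (-x)
  rw [add_neg_cancel, h0, hneg] at htri
  have hnn : 0 ≤ nrm x := by linarith
  exact lt_of_le_of_ne hnn (fun he => hx ((h.eq_zero_iff x).mp he.symm))

lemma zetaW_smul' {d n m : ℕ} (β : Fin n → Fin d → ℝ) (α : Fin m → Fin d → ℝ)
    {c : ℝ} (hc : 0 < c) (lam : Fin d → ℝ) :
    zetaW β α (c • lam) = zetaW β α lam := by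
  unfold zetaW
  have h1 : Finset.univ.filter (fun i => pairR (c • lam) (β i) ≤ 0) =
      Finset.univ.filter (fun i => pairR lam (β i) ≤ 0) := by
    apply Finset.filter_congr
    intro i _
    rw [pairR_smul_left']
    constructor <;> intro hle <;> nlinarith
  have h2 : Finset.univ.filter (fun j => pairR (c • lam) (α j) < 0) =
      Finset.univ.filter (fun j => pairR lam (α j) < 0) := by
    apply Finset.filter_congr
    intro j _
    rw [pairR_smul_left']
    constructor <;> intro hle <;> nlinarith
  rw [h1, h2]

/-- for every θ and t > 0, the lattice points of θ + ∇̄_{ℓ,t} are contained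
in those of θ + ∇_ℓ. -/
theorem pinched_subset_barrel {d n m : ℕ} (hn : 1 ≤ n)
    (β : Fin n → Fin d → ℝ) (α : Fin m → Fin d → ℝ)
    (hβ : ∀ i, β i ∈ latticePts d) (hα : ∀ j, α j ∈ latticePts d)
    (lam0 : Fin d → ℝ)
    (hlam0β : ∀ i, pairR lam0 (β i) < 0)
    (hlam0α : ∀ j, pairR lam0 (α j) = 0)
    (ℓ : Fin d → ℝ) (hℓ : pairR lam0 ℓ ≠ 0)
    (nrm : (Fin d → ℝ) → ℝ) (hnrm : IsNorm nrm) (hnrm0 : nrm lam0 = 1)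
    (θ : Fin d → ℝ) (t : ℝ) (ht : 0 < t) :
    {χ | χ ∈ latticePts d ∧ χ - θ ∈ pinchedW β α lam0 ℓ nrm t} ⊆
      {χ | χ ∈ latticePts d ∧ χ - θ ∈ barrelW β α lam0 ℓ} := by
  intro χ hχ
  obtain ⟨hM, hpw⟩ := hχ
  obtain ⟨⟨h0, hcyl⟩, hp⟩ := hpw
  refine ⟨hM, h0, fun lam' hl => ?_⟩
  by_cases hz : lam' = 0
  · subst hz
    have hzz : zetaW β α (0 : Fin d → ℝ) = zetaW β α lam0 := by
      unfold zetaW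
      have h1 : Finset.univ.filter (fun i => pairR (0 : Fin d → ℝ) (β i) ≤ 0) =
          Finset.univ.filter (fun i => pairR lam0 (β i) ≤ 0) := by
        apply Finset.filter_congr
        intro i _
        simp [pairR_zero_left', (hlam0β i).le]
      have h2 : Finset.univ.filter (fun j => pairR (0 : Fin d → ℝ) (α j) < 0) =
          Finset.univ.filter (fun j => pairR lam0 (α j) < 0) := by
        apply Finset.filter_congr
        intro j _
        simp [pairR_zero_left', hlam0α j]
      rw [h1, h2]
    right; left
    constructor
    · have : etaW β α (0 : Fin d → ℝ) = 0 := by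
        rw [etaW, pairR_zero_left']
      rw [this, pairR_zero_left']
      norm_num
    · rw [hzz]
      have hη : etaW β α lam0 = pairR lam0 (zetaW β α lam0) := rfl
      have := (abs_le.mp h0).2
      rw [hη] at this
      exact this
  · have hcpos : 0 < nrm lam' := isNorm_pos hnrm hz
    set c := nrm lam' with hc
    set lam'' := c⁻¹ • lam' with hlam''
    have hicpos : 0 < c⁻¹ := inv_pos.mpr hcpos
    have hzeq : zetaW β α lam'' = zetaW β α lam' := zetaW_smul' β α hicpos lam'
    have hl'' : pairR lam'' ℓ = 0 := by
      rw [hlam'', pairR_smul_left', hl, mul_zero]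
    have hn'' : nrm lam'' = 1 := by
      rw [hlam'', hnrm.smul_eq, abs_of_pos hicpos]
      field_simp
      exact hc.symm
    have hpin := hp lam'' hl'' hn''
    set ζ := zetaW β α lam' with hζ
    have e1 : pairR (lam'' + t • lam0) (χ - θ) =
        c⁻¹ * pairR lam' (χ - θ) + t * pairR lam0 (χ - θ) := by
      rw [pairR_add_left', hlam'', pairR_smul_left', pairR_smul_left']
    have e2 : pairR (lam'' + t • lam0) (zetaW β α lam'') =
        c⁻¹ * pairR lam' ζ + t * pairR lam0 ζ := by
      rw [hzeq, pairR_add_left', hlam'', pairR_smul_left', pairR_smul_left']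
    rw [e1, e2] at hpin
    by_cases hs : |pairR lam' (χ - θ)| < etaW β α lam' / 2
    · left; exact hs
    · have hle := hcyl lam' hl
      have heq : |pairR lam' (χ - θ)| = etaW β α lam' / 2 :=
        le_antisymm hle (not_lt.mp hs)
      have hnn : 0 ≤ etaW β α lam' / 2 := heq ▸ abs_nonneg _
      have hη : etaW β α lam' = pairR lam' ζ := rfl
      obtain ⟨hL, hR⟩ := abs_le.mp hpin
      rcases (abs_eq hnn).mp heq with h | h
      · right; left
        refine ⟨h, ?_⟩
        rw [h, hη] at hR
        show pairR lam0 (χ - θ) ≤ pairR lam0 ζ / 2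
        nlinarith
      · right; right
        refine ⟨h, ?_⟩
        rw [h, hη] at hL
        show -(pairR lam0 ζ / 2) ≤ pairR lam0 (χ - θ)
        nlinarith
end
end

section
/- Existence and a sufficient criterion for λ_0-generic characters: Assume in addition that λ_0 is rational, i.e. λ_0 ∈ N ⊗ ℚ where N := Hom(M, ℤ), and let Γ := {⟨λ_0, χ⟩ : χ ∈ M} ⊆ ℚ, a cyclic subgroup. If θ ∈ M_ℝ satisfies ⟨λ_0, θ⟩ ∉ (1/2)Γ := {g/2 : g ∈ Γ}, then θ is λ_0-generic with respect to ℓ. In particular, since (1/2)Γ is a proper (discrete) subset of ℝ, λ_0-generic points θ with respect to ℓ exist. -/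
noncomputable section

lemma pairR_add {d : ℕ} (lam x y : Fin d → ℝ) :
    pairR lam (x + y) = pairR lam x + pairR lam y := by
  simp [pairR, mul_add, Finset.sum_add_distrib]

lemma pairR_sub {d : ℕ} (lam x y : Fin d → ℝ) :
    pairR lam (x - y) = pairR lam x - pairR lam y := by
  simp [pairR, mul_sub, Finset.sum_sub_distrib]

lemma pairR_neg {d : ℕ} (lam x : Fin d → ℝ) : pairR lam (-x) = -pairR lam x := by
  simp [pairR]

lemma pairR_smul {d : ℕ} (lam x : Fin d → ℝ) (c : ℝ) :
    pairR lam (c • x) = c * pairR lam x := by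
  simp [pairR, Finset.mul_sum, mul_left_comm]

lemma pairR_sum {d k : ℕ} (lam : Fin d → ℝ) (s : Finset (Fin k)) (f : Fin k → Fin d → ℝ) :
    pairR lam (∑ j ∈ s, f j) = ∑ j ∈ s, pairR lam (f j) := by
  unfold pairR
  simp only [Finset.sum_apply, Finset.mul_sum]
  exact Finset.sum_comm

lemma lat_zero (d : ℕ) : (0 : Fin d → ℝ) ∈ latticePts d := ⟨0, by ext i; simp⟩

lemma lat_add {d : ℕ} {x y : Fin d → ℝ} (hx : x ∈ latticePts d) (hy : y ∈ latticePts d) :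
    x + y ∈ latticePts d := by
  obtain ⟨a, ha⟩ := hx; obtain ⟨b, hb⟩ := hy
  exact ⟨a + b, by ext i; simp [← ha, ← hb]⟩

lemma lat_sum {d k : ℕ} (s : Finset (Fin k)) (f : Fin k → Fin d → ℝ)
    (h : ∀ j ∈ s, f j ∈ latticePts d) : (∑ j ∈ s, f j) ∈ latticePts d := by
  classical
  induction s using Finset.induction with
  | empty => simpa using lat_zero d
  | @insert a s hnot ih =>
    rw [Finset.sum_insert hnot]
    exact lat_add (h _ (Finset.mem_insert_self _ _))
      (ih fun j hj => h j (Finset.mem_insert_of_mem hj))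

/-- if λ₀ is rational and ⟨λ₀, θ⟩ ∉ (1/2)Γ, where Γ = {⟨λ₀, χ⟩ : χ ∈ M},
then θ is λ₀-generic with respect to ℓ; in particular λ₀-generic points exist. -/
theorem generic_points_exist {d n m : ℕ} (hn : 1 ≤ n)
    (β : Fin n → Fin d → ℝ) (α : Fin m → Fin d → ℝ)
    (hβ : ∀ i, β i ∈ latticePts d) (hα : ∀ j, α j ∈ latticePts d)
    (lam0 : Fin d → ℝ)
    (hlam0β : ∀ i, pairR lam0 (β i) < 0)
    (hlam0α : ∀ j, pairR lam0 (α j) = 0)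
    (ℓ : Fin d → ℝ) (hℓ : pairR lam0 ℓ ≠ 0)
    (hrat : ∀ i, ∃ q : ℚ, lam0 i = (q : ℝ)) :
    (∀ θ : Fin d → ℝ,
        pairR lam0 θ ∉
          {x : ℝ | ∃ g ∈ {y : ℝ | ∃ χ ∈ latticePts d, pairR lam0 χ = y}, x = g / 2} →
        genericW β α lam0 ℓ θ) ∧
      ∃ θ : Fin d → ℝ, genericW β α lam0 ℓ θ := by
  classical
  have main : ∀ θ : Fin d → ℝ,
      pairR lam0 θ ∉
        {x : ℝ | ∃ g ∈ {y : ℝ | ∃ χ ∈ latticePts d, pairR lam0 χ = y}, x = g / 2} →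
      genericW β α lam0 ℓ θ := by
    intro θ hθ lam' _ χ hχ heq
    apply hθ
    set F := Finset.univ.filter (fun i => pairR lam' (β i) ≤ 0) with hF
    have hzeta : pairR lam0 (zetaW β α lam') = -(pairR lam0 (∑ i ∈ F, β i)) := by
      rw [zetaW, pairR_add, pairR_neg, pairR_sum, pairR_sum]
      simp [hlam0α]
    refine ⟨pairR lam0 (χ + χ + ∑ i ∈ F, β i), ⟨χ + χ + ∑ i ∈ F, β i,
      lat_add (lat_add hχ hχ) (lat_sum _ _ fun i _ => hβ i), rfl⟩, ?_⟩
    rw [pairR_sub, pairR_sub, pairR_smul, hzeta] at heq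
    rw [pairR_add, pairR_add]
    linarith
  refine ⟨main, ?_⟩
  have hlam0 : lam0 ≠ 0 := by
    intro h; apply hℓ; simp [h, pairR]
  obtain ⟨k, hk⟩ : ∃ k, lam0 k ≠ 0 := by
    by_contra h; push_neg at h; exact hlam0 (funext h)
  refine ⟨Pi.single k (Real.sqrt 2 / lam0 k), main _ ?_⟩
  have hpθ : pairR lam0 (Pi.single k (Real.sqrt 2 / lam0 k)) = Real.sqrt 2 := by
    unfold pairR
    rw [Finset.sum_eq_single k]
    · rw [Pi.single_eq_same]; field_simp
    · intro b _ hb; simp [Pi.single_eq_of_ne hb]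
    · simp
  rw [hpθ]
  rintro ⟨g, ⟨χ, ⟨c, rfl⟩, rfl⟩, hsq⟩
  choose q hq using hrat
  have : pairR lam0 (fun i => ((c i : ℝ))) = ((∑ i, q i * c i : ℚ) : ℝ) := by
    unfold pairR
    push_cast
    exact Finset.sum_congr rfl fun i _ => by rw [hq i]
  rw [this] at hsq
  exact irrational_sqrt_two ⟨(∑ i, q i * c i) / 2, by rw [hsq]; push_cast; ring⟩
end
end

section
/- Combinatorial (Hilbert–Mumford) form of Lemma 2.10 on instability: Let M be a free abelian group of finite rank, N := Hom(M, ℤ), with pairings extended ℚ-linearly. Let β_1, …, β_n ∈ M, let λ_0 ∈ N satisfy ⟨λ_0, β_i⟩ < 0 for all i, and let ℓ ∈ M ⊗ ℚ satisfy ⟨λ_0, ℓ⟩ < 0. Then for every subset S ⊆ {1, …, n} the following are equivalent: (i) there exists λ ∈ N with ⟨λ, ℓ⟩ < 0 and ⟨λ, β_i⟩ ≥ 0 for all i ∈ S; (ii) there exists λ' ∈ N with ⟨λ', ℓ⟩ = 0 and ⟨λ', β_i⟩ > 0 for all i ∈ S. -/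
/-- Integral pairing between a cocharacter `λ ∈ N = Fin d → ℤ` and a character
`χ ∈ M = Fin d → ℤ`. -/
def pairZ {d : ℕ} (lam chi : Fin d → ℤ) : ℤ := ∑ k, lam k * chi k

/-- ℚ-linear extension of the pairing, for `ℓ ∈ M ⊗ ℚ`. -/
def pairQ {d : ℕ} (lam : Fin d → ℤ) (chi : Fin d → ℚ) : ℚ := ∑ k, (lam k : ℚ) * chi k

lemma pairZ_comb {d : ℕ} (a b : ℤ) (x y chi : Fin d → ℤ) :
    pairZ (fun k => a * x k + b * y k) chi = a * pairZ x chi + b * pairZ y chi := by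
  simp only [pairZ, Finset.mul_sum, ← Finset.sum_add_distrib]
  exact Finset.sum_congr rfl fun k _ => by ring

lemma pairQ_comb {d : ℕ} (a b : ℤ) (x y : Fin d → ℤ) (chi : Fin d → ℚ) :
    pairQ (fun k => a * x k + b * y k) chi
      = (a : ℚ) * pairQ x chi + (b : ℚ) * pairQ y chi := by
  simp only [pairQ, Finset.mul_sum, ← Finset.sum_add_distrib]
  exact Finset.sum_congr rfl fun k _ => by push_cast; ring

/-- combinatorial form of Lemma 2.10, Hilbert–Mumford instability:
given weights β_i, a central λ₀ with ⟨λ₀, β_i⟩ < 0 for all i, and ℓ ∈ M ⊗ ℚ with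
⟨λ₀, ℓ⟩ < 0, a subset S is destabilized by some λ with ⟨λ, ℓ⟩ < 0 iff it is driven to
zero by some λ' in the kernel of ℓ. -/
theorem hilbert_mumford_instability_combinatorial {d n : ℕ}
    (β : Fin n → Fin d → ℤ) (lam0 : Fin d → ℤ)
    (hlam0 : ∀ i, pairZ lam0 (β i) < 0)
    (ℓ : Fin d → ℚ) (hℓ : pairQ lam0 ℓ < 0)
    (S : Set (Fin n)) :
    (∃ lam : Fin d → ℤ, pairQ lam ℓ < 0 ∧ ∀ i ∈ S, 0 ≤ pairZ lam (β i)) ↔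
      (∃ lam' : Fin d → ℤ, pairQ lam' ℓ = 0 ∧ ∀ i ∈ S, 0 < pairZ lam' (β i)) := by
  constructor
  · rintro ⟨lam, hlt, hS⟩
    set q : ℚ := pairQ lam ℓ / pairQ lam0 ℓ with hq
    have hqpos : 0 < q := div_pos_iff.2 (Or.inr ⟨hlt, hℓ⟩)
    have hnum : 0 < q.num := Rat.num_pos.2 hqpos
    have hden : 0 < (q.den : ℤ) := by exact_mod_cast q.pos
    refine ⟨fun k => (q.den : ℤ) * lam k + (-q.num) * lam0 k, ?_, ?_⟩
    · rw [pairQ_comb]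
      have : (q.den : ℚ) * pairQ lam ℓ = (q.num : ℚ) * pairQ lam0 ℓ := by
        have h0 : pairQ lam0 ℓ ≠ 0 := ne_of_lt hℓ
        have hd : (q.den : ℚ) ≠ 0 := by positivity
        have : (q.den : ℚ) * q = (q.num : ℚ) := by
          rw [mul_comm]
          exact (eq_div_iff hd).mp (Rat.num_div_den q).symm
        calc (q.den : ℚ) * pairQ lam ℓ = (q.den : ℚ) * (q * pairQ lam0 ℓ) := by
              rw [hq]; field_simp
          _ = ((q.den : ℚ) * q) * pairQ lam0 ℓ := by ring
          _ = (q.num : ℚ) * pairQ lam0 ℓ := by rw [this]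
      push_cast
      linarith [this]
    · intro i hi
      rw [pairZ_comb]
      have h1 := hS i hi
      have h2 := hlam0 i
      nlinarith
  · rintro ⟨lam', hzero, hS⟩
    set N : ℤ := ∑ i, (-pairZ lam0 (β i)) with hN
    refine ⟨fun k => N * lam' k + 1 * lam0 k, ?_, ?_⟩
    · rw [pairQ_comb, hzero]; simpa using hℓ
    · intro i hi
      rw [pairZ_comb]
      have h1 := hS i hi
      have h2 := hlam0 i
      have hNi : -pairZ lam0 (β i) ≤ N := by
        rw [hN]
        exact Finset.single_le_sum (f := fun j => -pairZ lam0 (β j))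
          (fun j _ => by simpa using (hlam0 j).le) (Finset.mem_univ i)
      nlinarith
end
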